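/- Let n be a positive even integer and m = n²+1. For all 1 ≤ i,j ≤ n, the Jacobi symbol of the rotated sequential-matrix entry satisfies (a_{j,n-i+1}/m) = (-1)^(n²/4) · (a_{i,j}/m), where a_{i,j} = j + (i-1)n. -/
import Mathlib

/-- For odd `b` dividing `n` with `n` even, `J(b | n²+1) = 1`. -/
lemma jacobi_odd_dvd_aux (n b : ℕ) (hb : Odd b) (hdvd : b ∣ n) (hev : Even n) :
    jacobiSym (b : ℤ) (n ^ 2 + 1) = 1 := by
  obtain ⟨t, ht⟩ := hev
  have hm4 : (n ^ 2 + 1) % 4 = 1 := by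
    have : n ^ 2 + 1 = 4 * t ^ 2 + 1 := by subst ht; ring
    omega
  rw [← jacobiSym.quadratic_reciprocity_one_mod_four hm4 hb]
  have h1 : ((n ^ 2 + 1 : ℕ) : ℤ) % (b : ℤ) = (1 : ℤ) % (b : ℤ) := by
    have hd : (b : ℤ) ∣ ((n ^ 2 + 1 : ℕ) : ℤ) - 1 := by
      push_cast
      have : (b : ℤ) ∣ (n : ℤ) := Int.natCast_dvd_natCast.mpr hdvd
      have : (b : ℤ) ∣ (n : ℤ) ^ 2 := Dvd.dvd.pow this (by norm_num)
      simpa using this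
    exact (Int.ModEq.symm (Int.modEq_iff_dvd.mpr (by simpa using hd)))
  rw [jacobiSym.mod_left' h1, jacobiSym.one_left]

/-- Key lemma: for even positive `n`, `J(n | n²+1) = (-1)^(n²/4)`. -/
lemma jacobi_n_aux (n : ℕ) (hn : 0 < n) (hev : Even n) :
    jacobiSym (n : ℤ) (n ^ 2 + 1) = (-1) ^ (n ^ 2 / 4) := by
  set m := n ^ 2 + 1 with hm
  set a := n.factorization 2 with ha
  set b := ordCompl[2] n with hbdef
  have hmul : 2 ^ a * b = n := Nat.ordProj_mul_ordCompl_eq_self n 2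
  have hbodd : Odd b := by
    have := Nat.not_dvd_ordCompl Nat.prime_two hn.ne'
    exact Nat.odd_iff.mpr (Nat.two_dvd_ne_zero.mp this)
  have hbdvd : b ∣ n := Nat.ordCompl_dvd n 2
  have ha1 : 1 ≤ a := by
    have h2 : 2 ∣ n := hev.two_dvd
    have := Nat.Prime.factorization_pos_of_dvd Nat.prime_two hn.ne' h2
    omega
  have hJb : jacobiSym (b : ℤ) m = 1 := jacobi_odd_dvd_aux n b hbodd hbdvd hev
  have hmodd : m % 2 = 1 := by
    obtain ⟨t, ht⟩ := hev
    have : m = 4 * t ^ 2 + 1 := by rw [hm]; subst ht; ring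
    omega
  have hJ2 : jacobiSym (2 : ℤ) m = ZMod.χ₈ (m : ZMod 8) := jacobiSym.at_two (Nat.odd_iff.mpr hmodd)
  have key : jacobiSym (n : ℤ) m = jacobiSym (2 : ℤ) m ^ a := by
    calc jacobiSym (n : ℤ) m = jacobiSym ((2 ^ a * b : ℕ) : ℤ) m := by rw [hmul]
    _ = jacobiSym ((2 : ℤ) ^ a * (b : ℤ)) m := by push_cast; ring_nf
    _ = jacobiSym ((2 : ℤ) ^ a) m * jacobiSym (b : ℤ) m := jacobiSym.mul_left _ _ _
    _ = jacobiSym (2 : ℤ) m ^ a := by rw [hJb, jacobiSym.pow_left, mul_one]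
  rcases Nat.even_or_odd (n / 2) with hte | hto
  · -- 4 ∣ n, m % 8 = 1
    obtain ⟨s, hs⟩ := hte
    obtain ⟨t, ht⟩ := hev
    have hn4 : n = 4 * s := by omega
    have hm8 : m % 8 = 1 := by
      have : m = 8 * (2 * s ^ 2) + 1 := by rw [hm, hn4]; ring
      omega
    have hχ : ZMod.χ₈ (m : ZMod 8) = 1 := by
      rw [ZMod.χ₈_nat_eq_if_mod_eight]
      simp [hm8, hmodd]
    have hdiv : n ^ 2 / 4 = 4 * s ^ 2 := by
      have : n ^ 2 = 4 * (4 * s ^ 2) := by rw [hn4]; ring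
      omega
    rw [key, hJ2, hχ, hdiv, one_pow]
    rw [Even.neg_one_pow ⟨2 * s ^ 2, by ring⟩]
  · -- n ≡ 2 mod 4, a = 1, m % 8 = 5
    obtain ⟨s, hs⟩ := hto
    have hn4 : n = 4 * s + 2 := by
      obtain ⟨t, ht⟩ := hev; omega
    have hm8 : m % 8 = 5 := by
      have : m = 8 * (2 * s ^ 2 + 2 * s) + 5 := by rw [hm, hn4]; ring
      omega
    have hχ : ZMod.χ₈ (m : ZMod 8) = -1 := by
      rw [ZMod.χ₈_nat_eq_if_mod_eight]
      simp [hm8, hmodd]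
    have ha' : a = 1 := by
      by_contra h
      have ha2 : 2 ≤ a := by omega
      have : 4 ∣ n := by
        have : 2 ^ 2 ∣ 2 ^ a := pow_dvd_pow 2 ha2
        have := this.trans ⟨b, hmul.symm⟩
        simpa using this
      omega
    have hdiv : n ^ 2 / 4 = 4 * (s ^ 2 + s) + 1 := by
      have : n ^ 2 = 4 * (4 * (s ^ 2 + s) + 1) := by rw [hn4]; ring
      omega
    rw [key, hJ2, hχ, ha', pow_one, hdiv]
    rw [Odd.neg_one_pow ⟨2 * (s ^ 2 + s), by ring⟩]

theorem jacobi_rot90 (n : ℕ) (hn : 0 < n) (hev : Even n)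
    (i j : ℤ) (hi1 : 1 ≤ i) (hin : i ≤ (n : ℤ)) (hj1 : 1 ≤ j) (hjn : j ≤ (n : ℤ)) :
    jacobiSym (((n : ℤ) - i + 1) + (j - 1) * n) (n ^ 2 + 1) =
      (-1) ^ (n ^ 2 / 4) * jacobiSym (j + (i - 1) * n) (n ^ 2 + 1) := by
  have hmod : (((n : ℤ) - i + 1) + (j - 1) * n) % ((n ^ 2 + 1 : ℕ) : ℤ)
      = ((n : ℤ) * (j + (i - 1) * n)) % ((n ^ 2 + 1 : ℕ) : ℤ) := by
    have heq : ((n : ℤ) - i + 1) + (j - 1) * n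
        = (n : ℤ) * (j + (i - 1) * n) + ((n ^ 2 + 1 : ℕ) : ℤ) * (-(i - 1)) := by
      push_cast; ring
    rw [heq, Int.add_mul_emod_self_left]
  rw [jacobiSym.mod_left' hmod, jacobiSym.mul_left,
    jacobi_n_aux n hn hev]
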